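/- Let F be a real symmetric positive-definite 2×2 matrix with entries F₀₀ = αθ⁻⁴ + 2βθ⁻³ + γθ⁻², F₀₁ = F₁₀ = αθ⁻³ + βθ⁻², F₁₁ = αθ⁻², where α > 0, γ > 0, αγ > β², and θ > 0. Then the (0,0) entry of F⁻¹ equals (γ - β²/α)⁻¹ θ², so that √((F⁻¹)₀₀) = (γ - β²/α)^{-1/2}·θ scales linearly in θ, whereas 1/√(F₀₀) = O(θ²) as θ → 0. -/

import Mathlib

open Filter Topology

/-- For the QFIM `F` with entries `F₀₀ = αθ⁻⁴ + 2βθ⁻³ + γθ⁻²`,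
`F₀₁ = F₁₀ = αθ⁻³ + βθ⁻²`, `F₁₁ = αθ⁻²` (α, γ > 0, αγ > β²), the (0,0) entry of
`F⁻¹` equals `(γ - β²/α)⁻¹ θ²`, so `√((F⁻¹)₀₀) = (γ - β²/α)^{-1/2} θ` scales
linearly in `θ`, whereas `1/√F₀₀ = O(θ²)` as `θ → 0⁺`. -/
theorem nuisance_parameter_linear_scaling (α β γ : ℝ)
    (hα : 0 < α) (hγ : 0 < γ) (hβ : β ^ 2 < α * γ) :
    (∀ θ : ℝ, 0 < θ →
      (α / θ ^ 2) / ((α / θ ^ 4 + 2 * β / θ ^ 3 + γ / θ ^ 2) * (α / θ ^ 2) -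
          (α / θ ^ 3 + β / θ ^ 2) ^ 2) = (γ - β ^ 2 / α)⁻¹ * θ ^ 2 ∧
      Real.sqrt ((α / θ ^ 2) / ((α / θ ^ 4 + 2 * β / θ ^ 3 + γ / θ ^ 2) * (α / θ ^ 2) -
          (α / θ ^ 3 + β / θ ^ 2) ^ 2)) = (Real.sqrt (γ - β ^ 2 / α))⁻¹ * θ) ∧
    (fun θ : ℝ => 1 / Real.sqrt (α / θ ^ 4 + 2 * β / θ ^ 3 + γ / θ ^ 2)) =O[𝓝[>] (0 : ℝ)]
      (fun θ : ℝ => θ ^ 2) := by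
  have hga : 0 < γ - β ^ 2 / α := by
    rw [sub_pos, div_lt_iff₀ hα]; linarith
  constructor
  · intro θ hθ
    have hθ' : θ ≠ 0 := hθ.ne'
    have heq : (α / θ ^ 2) / ((α / θ ^ 4 + 2 * β / θ ^ 3 + γ / θ ^ 2) * (α / θ ^ 2) -
          (α / θ ^ 3 + β / θ ^ 2) ^ 2) = (γ - β ^ 2 / α)⁻¹ * θ ^ 2 := by
      have hden : (α / θ ^ 4 + 2 * β / θ ^ 3 + γ / θ ^ 2) * (α / θ ^ 2) -
          (α / θ ^ 3 + β / θ ^ 2) ^ 2 = (α * γ - β ^ 2) / θ ^ 4 := by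
        field_simp; ring
      have hd0 : (0:ℝ) < α * γ - β ^ 2 := by linarith
      have hinv : (γ - β ^ 2 / α)⁻¹ = α / (α * γ - β ^ 2) := by
        rw [eq_div_iff hd0.ne', inv_mul_eq_div, div_eq_iff hga.ne']
        field_simp
      rw [hden, hinv, div_eq_iff (by positivity)]
      field_simp
    refine ⟨heq, ?_⟩
    rw [heq, ← Real.sqrt_inv, Real.sqrt_mul (by positivity),
      Real.sqrt_sq hθ.le]
  · rw [Asymptotics.isBigO_iff]
    refine ⟨(Real.sqrt (α / 2))⁻¹, ?_⟩
    have htend : Tendsto (fun θ : ℝ => α + 2 * β * θ + γ * θ ^ 2) (𝓝 0) (𝓝 α) := by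
      have : Tendsto (fun θ : ℝ => α + 2 * β * θ + γ * θ ^ 2) (𝓝 0)
          (𝓝 (α + 2 * β * 0 + γ * 0 ^ 2)) := by
        apply Continuous.tendsto; continuity
      simpa using this
    have h1 : ∀ᶠ θ in 𝓝[>] (0 : ℝ), α / 2 < α + 2 * β * θ + γ * θ ^ 2 :=
      (htend.eventually (eventually_gt_nhds (by linarith))).filter_mono nhdsWithin_le_nhds
    filter_upwards [h1, self_mem_nhdsWithin] with θ hq hθ
    have hθ : (0 : ℝ) < θ := hθ
    have hq0 : (0 : ℝ) < α + 2 * β * θ + γ * θ ^ 2 := by linarith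
    have hF : α / θ ^ 4 + 2 * β / θ ^ 3 + γ / θ ^ 2 = (α + 2 * β * θ + γ * θ ^ 2) / θ ^ 4 := by
      field_simp
    rw [hF, Real.sqrt_div hq0.le, show θ ^ 4 = (θ ^ 2) ^ 2 by ring,
      Real.sqrt_sq (by positivity)]
    rw [one_div, inv_div]
    have hs2 : (0 : ℝ) < Real.sqrt (α / 2) := Real.sqrt_pos.mpr (by linarith)
    have hsq : Real.sqrt (α / 2) ≤ Real.sqrt (α + 2 * β * θ + γ * θ ^ 2) :=
      Real.sqrt_le_sqrt (by linarith)
    simp only [Real.norm_eq_abs]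
    rw [abs_of_nonneg (by positivity), abs_of_nonneg (by positivity)]
    rw [div_le_iff₀ (by positivity)]
    rw [inv_mul_eq_div, div_mul_eq_mul_div, le_div_iff₀ hs2]
    nlinarith [sq_nonneg θ]
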